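/- The second-order remainder for the multiplicative-IV moment functional admits the product-bias representation: R(P̄,P) = E_P[ (δ̄−δ)·( (ρ̄/δ̄^A)(δ̄^A−δ^A) − (ρ̄−ρ) ) + (ρ̄/δ̄^A)·(π̄₁−π₁)·( ((μ̄₁−μ₁)−δ̄(λ̄₁−λ₁))/π̄₁ + ((μ̄₀−μ₀)−δ̄(λ̄₀−λ₀))/(1−π̄₁) ) ]. -/

import Mathlib

open MeasureTheory

section Helpers

lemma abs_mul_le' {a b p q : ℝ} (ha : |a| ≤ p) (hb : |b| ≤ q) : |a * b| ≤ p * q := by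
  rw [abs_mul]
  exact mul_le_mul ha hb (abs_nonneg b) ((abs_nonneg a).trans ha)

lemma abs_sub_le'' {a b p q : ℝ} (ha : |a| ≤ p) (hb : |b| ≤ q) : |a - b| ≤ p + q :=
  (abs_sub a b).trans (add_le_add ha hb)

lemma abs_add_le'' {a b p q : ℝ} (ha : |a| ≤ p) (hb : |b| ≤ q) : |a + b| ≤ p + q :=
  (abs_add_le a b).trans (add_le_add ha hb)

lemma abs_div_le' {a b p c : ℝ} (ha : |a| ≤ p) (hc : 0 < c) (hb : c ≤ |b|) :
    |a / b| ≤ p / c := by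
  rw [abs_div]
  exact div_le_div₀ ((abs_nonneg a).trans ha) ha hc hb

lemma integrable_of_bdd {Ω : Type*} [MeasurableSpace Ω] {P : Measure Ω} [IsFiniteMeasure P]
    {f : Ω → ℝ} (hf : AEStronglyMeasurable f P) {C : ℝ} (hC : ∀ ω, |f ω| ≤ C) :
    Integrable f P :=
  (integrable_const C).mono' hf (Filter.Eventually.of_forall fun ω => by
    simpa using hC ω)

lemma integral_mul_eq_of_condexp {Ω : Type*} {m m0 : MeasurableSpace Ω} (hm : m ≤ m0)
    (P : Measure Ω) [IsFiniteMeasure P]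
    {f g gc : Ω → ℝ} (hf : StronglyMeasurable[m] f)
    (hg : Integrable g P) (hfg : Integrable (fun ω => f ω * g ω) P)
    (hgc : P[g|m] =ᵐ[P] gc) :
    ∫ ω, f ω * g ω ∂P = ∫ ω, f ω * gc ω ∂P := by
  have h2 : P[f * g|m] =ᵐ[P] f * P[g|m] :=
    condExp_mul_of_stronglyMeasurable_left hf hfg hg
  have h3 : (f * P[g|m] : Ω → ℝ) =ᵐ[P] fun ω => f ω * gc ω :=
    hgc.mono fun ω h => by simp [h]
  calc ∫ ω, f ω * g ω ∂P = ∫ ω, (P[f * g|m]) ω ∂P := (integral_condExp hm).symm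
    _ = ∫ ω, f ω * gc ω ∂P := integral_congr_ae (h2.trans h3)

lemma keyalg (mu1 mu0 lam1 lam0 rho pi1 mub1 mub0 lamb1 lamb0 rhob pib1 : ℝ)
    (h1 : lam1 - lam0 ≠ 0) (h2 : lamb1 - lamb0 ≠ 0) (h3 : pib1 ≠ 0) (h4 : 1 - pib1 ≠ 0) :
    (mub1 - mub0) / (lamb1 - lamb0) * rho - (mu1 - mu0) / (lam1 - lam0) * rho
      + ((rhob / (lamb1 - lamb0) * (1 / pib1)
            * ((mu1 - mub1) - (mub1 - mub0) / (lamb1 - lamb0) * (lam1 - lamb1))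
          - rhob / (lamb1 - lamb0) * (-1 / (1 - pib1))
            * ((mu0 - mub0) - (mub1 - mub0) / (lamb1 - lamb0) * (lam0 - lamb0))) * pi1
        + rhob / (lamb1 - lamb0) * (-1 / (1 - pib1))
            * ((mu0 - mub0) - (mub1 - mub0) / (lamb1 - lamb0) * (lam0 - lamb0)))
    = ((mub1 - mub0) / (lamb1 - lamb0) - (mu1 - mu0) / (lam1 - lam0))
        * (rhob / (lamb1 - lamb0) * ((lamb1 - lamb0) - (lam1 - lam0)) - (rhob - rho))
      + rhob / (lamb1 - lamb0) * (pib1 - pi1)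
          * (((mub1 - mu1) - (mub1 - mub0) / (lamb1 - lamb0) * (lamb1 - lam1)) / pib1
            + ((mub0 - mu0) - (mub1 - mub0) / (lamb1 - lamb0) * (lamb0 - lam0)) / (1 - pib1)) := by
  have r1 : (mub1 - mub0) / (lamb1 - lamb0) * (lamb1 - lamb0) = mub1 - mub0 :=
    div_mul_cancel₀ _ h2
  have r2 : (mu1 - mu0) / (lam1 - lam0) * (lam1 - lam0) = mu1 - mu0 := div_mul_cancel₀ _ h1
  have r5 : rhob / (lamb1 - lamb0) * (lamb1 - lamb0) = rhob := div_mul_cancel₀ _ h2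
  have r3 : (1 / pib1) * pib1 = 1 := one_div_mul_cancel h3
  have r4 : (1 / (1 - pib1)) * (1 - pib1) = 1 := one_div_mul_cancel h4
  linear_combination (rhob / (lamb1 - lamb0)
        * ((mu1 - mub1) - (mub1 - mub0) / (lamb1 - lamb0) * (lam1 - lamb1))) * r3
    - (rhob / (lamb1 - lamb0)
        * ((mu0 - mub0) - (mub1 - mub0) / (lamb1 - lamb0) * (lam0 - lamb0))) * r4
    - (rhob / (lamb1 - lamb0)) * r2 + (rhob / (lamb1 - lamb0)) * r1
    + ((mu1 - mu0) / (lam1 - lam0) - (mub1 - mub0) / (lamb1 - lamb0)) * r5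

end Helpers

/-- The second-order remainder for the multiplicative-IV moment functional
admits the product-bias representation:
`R(P̄,P) = E_P[(δ̄−δ)((ρ̄/δ̄^A)(δ̄^A−δ^A) − (ρ̄−ρ))
  + (ρ̄/δ̄^A)(π̄₁−π₁)(((μ̄₁−μ₁)−δ̄(λ̄₁−λ₁))/π̄₁ + ((μ̄₀−μ₀)−δ̄(λ̄₀−λ₀))/(1−π̄₁))]`. -/
theorem stmt6
    {Ω 𝒳 : Type*} [MeasurableSpace Ω] [MeasurableSpace 𝒳]
    (P : Measure Ω) [IsProbabilityMeasure P]
    (X : Ω → 𝒳) (Z A Y : Ω → ℝ)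
    (hX : Measurable X) (hZ : Measurable Z) (hA : Measurable A) (hY : Measurable Y)
    (hZ01 : ∀ ω, Z ω = 0 ∨ Z ω = 1) (hA01 : ∀ ω, A ω = 0 ∨ A ω = 1)
    (M : ℝ → ℝ) (hMmeas : Measurable M) (hMbdd : ∃ C, ∀ y, |M y| ≤ C)
    -- true nuisance functions (versions of the conditional expectations)
    (π₁ ρ : 𝒳 → ℝ) (μ lam : ℝ → 𝒳 → ℝ)
    (hπmeas : Measurable π₁) (hρmeas : Measurable ρ)
    (hμmeas : ∀ z, Measurable (μ z)) (hlammeas : ∀ z, Measurable (lam z))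
    (hπ : P[Z | MeasurableSpace.comap X inferInstance] =ᵐ[P] fun ω => π₁ (X ω))
    (hρ : P[A | MeasurableSpace.comap X inferInstance] =ᵐ[P] fun ω => ρ (X ω))
    (hμ : P[(fun ω => M (Y ω) * (1 - A ω)) |
        MeasurableSpace.comap (fun ω => (Z ω, X ω)) inferInstance]
      =ᵐ[P] fun ω => μ (Z ω) (X ω))
    (hlam : P[A | MeasurableSpace.comap (fun ω => (Z ω, X ω)) inferInstance]
      =ᵐ[P] fun ω => lam (Z ω) (X ω))
    -- candidate (possibly misspecified) nuisance functions
    (π₁b ρb : 𝒳 → ℝ) (μb lamb : ℝ → 𝒳 → ℝ)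
    (hπbmeas : Measurable π₁b) (hρbmeas : Measurable ρb)
    (hμbmeas : ∀ z, Measurable (μb z)) (hlambmeas : ∀ z, Measurable (lamb z))
    -- regularity: denominators bounded away from zero, nuisances bounded
    (c : ℝ) (hc : 0 < c)
    (hπbd : ∀ x, c ≤ π₁ x ∧ π₁ x ≤ 1 - c) (hπbbd : ∀ x, c ≤ π₁b x ∧ π₁b x ≤ 1 - c)
    (hδA : ∀ x, c ≤ |lam 1 x - lam 0 x|) (hδAb : ∀ x, c ≤ |lamb 1 x - lamb 0 x|)
    (hnuisbd : ∃ C, ∀ z x, |μ z x| ≤ C ∧ |lam z x| ≤ C ∧ |ρ x| ≤ C ∧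
      |μb z x| ≤ C ∧ |lamb z x| ≤ C ∧ |ρb x| ≤ C)
    -- the number `h(β,P̄)` computed under the candidate distribution
    (hPbar : ℝ) :
    hPbar
      - (∫ ω, ((μ 1 (X ω) - μ 0 (X ω)) / (lam 1 (X ω) - lam 0 (X ω))) * ρ (X ω) ∂P)
      + (∫ ω,
          (((μb 1 (X ω) - μb 0 (X ω)) / (lamb 1 (X ω) - lamb 0 (X ω))) * A ω - hPbar)
            + (ρb (X ω) / (lamb 1 (X ω) - lamb 0 (X ω)))
                * ((2 * Z ω - 1) / (Z ω * π₁b (X ω) + (1 - Z ω) * (1 - π₁b (X ω))))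
                * (M (Y ω) * (1 - A ω)
                    - (Z ω * μb 1 (X ω) + (1 - Z ω) * μb 0 (X ω))
                    - (A ω - (Z ω * lamb 1 (X ω) + (1 - Z ω) * lamb 0 (X ω)))
                        * ((μb 1 (X ω) - μb 0 (X ω)) / (lamb 1 (X ω) - lamb 0 (X ω)))) ∂P)
      = ∫ ω,
          (((μb 1 (X ω) - μb 0 (X ω)) / (lamb 1 (X ω) - lamb 0 (X ω)))
              - ((μ 1 (X ω) - μ 0 (X ω)) / (lam 1 (X ω) - lam 0 (X ω))))
            * ((ρb (X ω) / (lamb 1 (X ω) - lamb 0 (X ω)))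
                  * ((lamb 1 (X ω) - lamb 0 (X ω)) - (lam 1 (X ω) - lam 0 (X ω)))
                - (ρb (X ω) - ρ (X ω)))
          + (ρb (X ω) / (lamb 1 (X ω) - lamb 0 (X ω))) * (π₁b (X ω) - π₁ (X ω))
              * (((μb 1 (X ω) - μ 1 (X ω))
                    - ((μb 1 (X ω) - μb 0 (X ω)) / (lamb 1 (X ω) - lamb 0 (X ω)))
                        * (lamb 1 (X ω) - lam 1 (X ω))) / π₁b (X ω)
                + ((μb 0 (X ω) - μ 0 (X ω))
                    - ((μb 1 (X ω) - μb 0 (X ω)) / (lamb 1 (X ω) - lamb 0 (X ω)))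
                        * (lamb 0 (X ω) - lam 0 (X ω))) / (1 - π₁b (X ω))) ∂P := by
  obtain ⟨CM, hCM⟩ := hMbdd
  obtain ⟨C, hC⟩ := hnuisbd
  have hm1 : MeasurableSpace.comap X inferInstance ≤ ‹MeasurableSpace Ω› := hX.comap_le
  have hm2 : MeasurableSpace.comap (fun ω => (Z ω, X ω)) inferInstance
      ≤ ‹MeasurableSpace Ω› := (hZ.prodMk hX).comap_le
  have hXm1 : Measurable[MeasurableSpace.comap X inferInstance] X :=
    Measurable.of_comap_le le_rfl
  have hZXm2 : Measurable[MeasurableSpace.comap (fun ω => (Z ω, X ω)) inferInstance]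
      (fun ω => (Z ω, X ω)) := Measurable.of_comap_le le_rfl
  have hXm2 : Measurable[MeasurableSpace.comap (fun ω => (Z ω, X ω)) inferInstance] X :=
    measurable_snd.comp hZXm2
  have hZm2 : Measurable[MeasurableSpace.comap (fun ω => (Z ω, X ω)) inferInstance] Z :=
    measurable_fst.comp hZXm2
  -- abbreviations
  set q : 𝒳 → ℝ := fun x => ρb x / (lamb 1 x - lamb 0 x) with hqd
  set db : 𝒳 → ℝ := fun x => (μb 1 x - μb 0 x) / (lamb 1 x - lamb 0 x) with hdbd
  set dlt : 𝒳 → ℝ := fun x => (μ 1 x - μ 0 x) / (lam 1 x - lam 0 x) with hdltd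
  set H1 : 𝒳 → ℝ :=
    fun x => q x * (1 / π₁b x) * ((μ 1 x - μb 1 x) - db x * (lam 1 x - lamb 1 x)) with hH1d
  set H0 : 𝒳 → ℝ :=
    fun x => q x * (-1 / (1 - π₁b x)) * ((μ 0 x - μb 0 x) - db x * (lam 0 x - lamb 0 x)) with hH0d
  set F : Ω → ℝ :=
    fun ω => q (X ω) * ((2 * Z ω - 1) / (Z ω * π₁b (X ω) + (1 - Z ω) * (1 - π₁b (X ω)))) with hFd
  set gf : Ω → ℝ := fun ω => M (Y ω) * (1 - A ω) - db (X ω) * A ω with hgfd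
  set kf : Ω → ℝ := fun ω => (Z ω * μb 1 (X ω) + (1 - Z ω) * μb 0 (X ω))
      - (Z ω * lamb 1 (X ω) + (1 - Z ω) * lamb 0 (X ω)) * db (X ω) with hkfd
  set gc : Ω → ℝ := fun ω => μ (Z ω) (X ω) - db (X ω) * lam (Z ω) (X ω) with hgcd
  -- nonvanishing denominators
  have hdAne : ∀ x : 𝒳, lam 1 x - lam 0 x ≠ 0 := fun x =>
    abs_pos.mp (lt_of_lt_of_le hc (hδA x))
  have hdAbne : ∀ x : 𝒳, lamb 1 x - lamb 0 x ≠ 0 := fun x =>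
    abs_pos.mp (lt_of_lt_of_le hc (hδAb x))
  have hπbne : ∀ x, π₁b x ≠ 0 := fun x => ((hc.trans_le (hπbbd x).1)).ne'
  have h1πbne : ∀ x, (1 : ℝ) - π₁b x ≠ 0 := fun x => by
    have h := (hπbbd x).2
    have : (0 : ℝ) < 1 - π₁b x := by linarith
    exact this.ne'
  -- measurability
  have hqm : Measurable q := by
    rw [hqd]; exact hρbmeas.div ((hlambmeas 1).sub (hlambmeas 0))
  have hdbm : Measurable db := by
    rw [hdbd]; exact ((hμbmeas 1).sub (hμbmeas 0)).div ((hlambmeas 1).sub (hlambmeas 0))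
  have hdltm : Measurable dlt := by
    rw [hdltd]; exact ((hμmeas 1).sub (hμmeas 0)).div ((hlammeas 1).sub (hlammeas 0))
  have hH1m : Measurable H1 := by
    rw [hH1d]
    exact (hqm.mul (measurable_const.div hπbmeas)).mul
      (((hμmeas 1).sub (hμbmeas 1)).sub (hdbm.mul ((hlammeas 1).sub (hlambmeas 1))))
  have hH0m : Measurable H0 := by
    rw [hH0d]
    exact (hqm.mul (measurable_const.div (measurable_const.sub hπbmeas))).mul
      (((hμmeas 0).sub (hμbmeas 0)).sub (hdbm.mul ((hlammeas 0).sub (hlambmeas 0))))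
  have hFm : Measurable F := by
    rw [hFd]
    exact (hqm.comp hX).mul (((hZ.const_mul 2).sub measurable_const).div
      ((hZ.mul (hπbmeas.comp hX)).add
        ((measurable_const.sub hZ).mul (measurable_const.sub (hπbmeas.comp hX)))))
  have hgfm : Measurable gf := by
    rw [hgfd]
    exact ((hMmeas.comp hY).mul (measurable_const.sub hA)).sub ((hdbm.comp hX).mul hA)
  have hkfm : Measurable kf := by
    rw [hkfd]
    exact ((hZ.mul ((hμbmeas 1).comp hX)).add
        ((measurable_const.sub hZ).mul ((hμbmeas 0).comp hX))).sub
      (((hZ.mul ((hlambmeas 1).comp hX)).add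
        ((measurable_const.sub hZ).mul ((hlambmeas 0).comp hX))).mul (hdbm.comp hX))
  have hFm2 : StronglyMeasurable[MeasurableSpace.comap (fun ω => (Z ω, X ω)) inferInstance] F := by
    rw [hFd]
    exact ((hqm.comp hXm2).mul (((hZm2.const_mul 2).sub measurable_const).div
      ((hZm2.mul (hπbmeas.comp hXm2)).add
        ((measurable_const.sub hZm2).mul
          (measurable_const.sub (hπbmeas.comp hXm2)))))).stronglyMeasurable
  have hdbm2 : StronglyMeasurable[MeasurableSpace.comap (fun ω => (Z ω, X ω)) inferInstance] (fun ω => db (X ω)) := (hdbm.comp hXm2).stronglyMeasurable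
  have hdbm1 : StronglyMeasurable[MeasurableSpace.comap X inferInstance] (fun ω => db (X ω)) := (hdbm.comp hXm1).stronglyMeasurable
  have hφm1 : StronglyMeasurable[MeasurableSpace.comap X inferInstance] (fun ω => H1 (X ω) - H0 (X ω)) :=
    ((hH1m.comp hXm1).sub (hH0m.comp hXm1)).stronglyMeasurable
  -- bounds
  have hZb : ∀ ω, |Z ω| ≤ 1 := fun ω => by rcases hZ01 ω with h | h <;> rw [h] <;> norm_num
  have hZb' : ∀ ω, |1 - Z ω| ≤ 1 := fun ω => by rcases hZ01 ω with h | h <;> rw [h] <;> norm_num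
  have hZb'' : ∀ ω, |2 * Z ω - 1| ≤ 1 := fun ω => by
    rcases hZ01 ω with h | h <;> rw [h] <;> norm_num
  have hAb : ∀ ω, |A ω| ≤ 1 := fun ω => by rcases hA01 ω with h | h <;> rw [h] <;> norm_num
  have hAb' : ∀ ω, |1 - A ω| ≤ 1 := fun ω => by rcases hA01 ω with h | h <;> rw [h] <;> norm_num
  have hdenZ : ∀ ω, c ≤ |Z ω * π₁b (X ω) + (1 - Z ω) * (1 - π₁b (X ω))| := fun ω => by
    rcases hπbbd (X ω) with ⟨h1, h2⟩
    rcases hZ01 ω with h | h <;> rw [h]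
    · rw [show (0 : ℝ) * π₁b (X ω) + (1 - 0) * (1 - π₁b (X ω)) = 1 - π₁b (X ω) by ring,
        abs_of_nonneg (by linarith)]
      linarith
    · rw [show (1 : ℝ) * π₁b (X ω) + (1 - 1) * (1 - π₁b (X ω)) = π₁b (X ω) by ring,
        abs_of_nonneg (by linarith)]
      linarith
  have hbq : ∀ x, |q x| ≤ C / c := fun x => by
    simp only [hqd]; exact abs_div_le' (hC 0 x).2.2.2.2.2 hc (hδAb x)
  have hbdb : ∀ x, |db x| ≤ (C + C) / c := fun x => by
    simp only [hdbd]
    exact abs_div_le' (abs_sub_le'' (hC 1 x).2.2.2.1 (hC 0 x).2.2.2.1) hc (hδAb x)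
  have hbdlt : ∀ x, |dlt x| ≤ (C + C) / c := fun x => by
    simp only [hdltd]
    exact abs_div_le' (abs_sub_le'' (hC 1 x).1 (hC 0 x).1) hc (hδA x)
  have hbπinv : ∀ x, |1 / π₁b x| ≤ 1 / c := fun x =>
    abs_div_le' (by norm_num) hc ((hπbbd x).1.trans (le_abs_self _))
  have hbπinv' : ∀ x, |(-1 : ℝ) / (1 - π₁b x)| ≤ 1 / c := fun x =>
    abs_div_le' (by norm_num) hc
      (le_trans (by linarith [(hπbbd x).2]) (le_abs_self _))
  have hbπ1 : ∀ x, |π₁ x| ≤ 1 := fun x =>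
    abs_le.mpr ⟨by linarith [(hπbd x).1], by linarith [(hπbd x).2]⟩
  have hbH1 : ∀ x, |H1 x| ≤ C / c * (1 / c) * ((C + C) + (C + C) / c * (C + C)) := fun x => by
    simp only [hH1d]
    exact abs_mul_le' (abs_mul_le' (hbq x) (hbπinv x))
      (abs_sub_le'' (abs_sub_le'' (hC 1 x).1 (hC 1 x).2.2.2.1)
        (abs_mul_le' (hbdb x) (abs_sub_le'' (hC 1 x).2.1 (hC 1 x).2.2.2.2.1)))
  have hbH0 : ∀ x, |H0 x| ≤ C / c * (1 / c) * ((C + C) + (C + C) / c * (C + C)) := fun x => by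
    simp only [hH0d]
    exact abs_mul_le' (abs_mul_le' (hbq x) (hbπinv' x))
      (abs_sub_le'' (abs_sub_le'' (hC 0 x).1 (hC 0 x).2.2.2.1)
        (abs_mul_le' (hbdb x) (abs_sub_le'' (hC 0 x).2.1 (hC 0 x).2.2.2.2.1)))
  have hbF : ∀ ω, |F ω| ≤ C / c * (1 / c) := fun ω => by
    simp only [hFd]
    exact abs_mul_le' (hbq _) (abs_div_le' (hZb'' ω) hc (hdenZ ω))
  have hbgf : ∀ ω, |gf ω| ≤ CM * 1 + (C + C) / c * 1 := fun ω => by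
    simp only [hgfd]
    exact abs_sub_le'' (abs_mul_le' (hCM _) (hAb' ω)) (abs_mul_le' (hbdb _) (hAb ω))
  have hbkf : ∀ ω, |kf ω| ≤ (1 * C + 1 * C) + (1 * C + 1 * C) * ((C + C) / c) := fun ω => by
    simp only [hkfd]
    exact abs_sub_le''
      (abs_add_le'' (abs_mul_le' (hZb ω) (hC 1 _).2.2.2.1)
        (abs_mul_le' (hZb' ω) (hC 0 _).2.2.2.1))
      (abs_mul_le'
        (abs_add_le'' (abs_mul_le' (hZb ω) (hC 1 _).2.2.2.2.1)
          (abs_mul_le' (hZb' ω) (hC 0 _).2.2.2.2.1)) (hbdb _))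
  have hbgc : ∀ ω, |gc ω| ≤ C + (C + C) / c * C := fun ω => by
    simp only [hgcd]
    exact abs_sub_le'' (hC _ _).1 (abs_mul_le' (hbdb _) (hC _ _).2.1)
  -- integrability
  have intA : Integrable A P := integrable_of_bdd hA.aestronglyMeasurable hAb
  have intZ : Integrable Z P := integrable_of_bdd hZ.aestronglyMeasurable hZb
  have intdbA : Integrable (fun ω => db (X ω) * A ω) P :=
    integrable_of_bdd ((hdbm.comp hX).mul hA).aestronglyMeasurable
      (fun ω => abs_mul_le' (hbdb _) (hAb ω))
  have intMA : Integrable (fun ω => M (Y ω) * (1 - A ω)) P :=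
    integrable_of_bdd ((hMmeas.comp hY).mul (measurable_const.sub hA)).aestronglyMeasurable
      (fun ω => abs_mul_le' (hCM _) (hAb' ω))
  have intgf : Integrable gf P := integrable_of_bdd hgfm.aestronglyMeasurable hbgf
  have intkf : Integrable kf P := integrable_of_bdd hkfm.aestronglyMeasurable hbkf
  have intFgf : Integrable (fun ω => F ω * gf ω) P :=
    integrable_of_bdd (hFm.mul hgfm).aestronglyMeasurable
      (fun ω => abs_mul_le' (hbF ω) (hbgf ω))
  have intFkf : Integrable (fun ω => F ω * kf ω) P :=
    integrable_of_bdd (hFm.mul hkfm).aestronglyMeasurable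
      (fun ω => abs_mul_le' (hbF ω) (hbkf ω))
  have asmμ : AEStronglyMeasurable (fun ω => μ (Z ω) (X ω)) P :=
    ((stronglyMeasurable_condExp.mono hm2).aestronglyMeasurable).congr hμ
  have asmlam : AEStronglyMeasurable (fun ω => lam (Z ω) (X ω)) P :=
    ((stronglyMeasurable_condExp.mono hm2).aestronglyMeasurable).congr hlam
  have asmgc : AEStronglyMeasurable gc P := by
    rw [hgcd]
    exact asmμ.sub (((hdbm.comp hX).aestronglyMeasurable).mul asmlam)
  have intgc : Integrable gc P := integrable_of_bdd asmgc hbgc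
  have intFgc : Integrable (fun ω => F ω * gc ω) P :=
    integrable_of_bdd (hFm.aestronglyMeasurable.mul asmgc)
      (fun ω => abs_mul_le' (hbF ω) (hbgc ω))
  have intH0 : Integrable (fun ω => H0 (X ω)) P :=
    integrable_of_bdd (hH0m.comp hX).aestronglyMeasurable (fun ω => hbH0 _)
  have intφZ : Integrable (fun ω => (H1 (X ω) - H0 (X ω)) * Z ω) P :=
    integrable_of_bdd (((hH1m.comp hX).sub (hH0m.comp hX)).mul hZ).aestronglyMeasurable
      (fun ω => abs_mul_le' (abs_sub_le'' (hbH1 _) (hbH0 _)) (hZb ω))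
  have intφπ : Integrable (fun ω => (H1 (X ω) - H0 (X ω)) * π₁ (X ω)) P :=
    integrable_of_bdd
      (((hH1m.comp hX).sub (hH0m.comp hX)).mul (hπmeas.comp hX)).aestronglyMeasurable
      (fun ω => abs_mul_le' (abs_sub_le'' (hbH1 _) (hbH0 _)) (hbπ1 _))
  have intdbρ : Integrable (fun ω => db (X ω) * ρ (X ω)) P :=
    integrable_of_bdd ((hdbm.comp hX).mul (hρmeas.comp hX)).aestronglyMeasurable
      (fun ω => abs_mul_le' (hbdb _) (hC 0 _).2.2.1)
  have intT : Integrable (fun ω => dlt (X ω) * ρ (X ω)) P :=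
    integrable_of_bdd ((hdltm.comp hX).mul (hρmeas.comp hX)).aestronglyMeasurable
      (fun ω => abs_mul_le' (hbdlt _) (hC 0 _).2.2.1)
  -- conditional expectation computations
  have hgf_eq : gf = (fun ω => M (Y ω) * (1 - A ω)) - (fun ω => db (X ω) * A ω) := by
    funext ω; simp [hgfd]
  have hcd : P[gf|MeasurableSpace.comap (fun ω => (Z ω, X ω)) inferInstance] =ᵐ[P] gc := by
    rw [hgf_eq]
    refine (condExp_sub intMA intdbA _).trans ?_
    have h2 : P[(fun ω => db (X ω) * A ω)|MeasurableSpace.comap (fun ω => (Z ω, X ω)) inferInstance]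
        =ᵐ[P] fun ω => db (X ω) * (P[A|MeasurableSpace.comap (fun ω => (Z ω, X ω)) inferInstance]) ω :=
      condExp_mul_of_stronglyMeasurable_left hdbm2 intdbA intA
    filter_upwards [h2, hμ, hlam] with ω e2 e3 e4
    rw [Pi.sub_apply, e3, e2, e4]
  -- the three key integral identities
  have step1 : ∫ ω, db (X ω) * A ω ∂P = ∫ ω, db (X ω) * ρ (X ω) ∂P :=
    integral_mul_eq_of_condexp hm1 P hdbm1 intA intdbA hρ
  have step2 : ∫ ω, F ω * gf ω ∂P = ∫ ω, F ω * gc ω ∂P :=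
    integral_mul_eq_of_condexp hm2 P hFm2 intgf intFgf hcd
  have step3 : ∫ ω, (H1 (X ω) - H0 (X ω)) * Z ω ∂P
      = ∫ ω, (H1 (X ω) - H0 (X ω)) * π₁ (X ω) ∂P :=
    integral_mul_eq_of_condexp hm1 P hφm1 intZ intφZ hπ
  -- pointwise splitting over the binary Z
  have hsplit : ∀ ω, F ω * gc ω - F ω * kf ω = (H1 (X ω) - H0 (X ω)) * Z ω + H0 (X ω) := by
    intro ω
    rcases hZ01 ω with h | h <;>
      simp only [hFd, hgcd, hkfd, hH1d, hH0d, h] <;> norm_num <;> ring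
  -- assemble the influence-function integral
  have big : (∫ ω,
          (((μb 1 (X ω) - μb 0 (X ω)) / (lamb 1 (X ω) - lamb 0 (X ω))) * A ω - hPbar)
            + (ρb (X ω) / (lamb 1 (X ω) - lamb 0 (X ω)))
                * ((2 * Z ω - 1) / (Z ω * π₁b (X ω) + (1 - Z ω) * (1 - π₁b (X ω))))
                * (M (Y ω) * (1 - A ω)
                    - (Z ω * μb 1 (X ω) + (1 - Z ω) * μb 0 (X ω))
                    - (A ω - (Z ω * lamb 1 (X ω) + (1 - Z ω) * lamb 0 (X ω)))
                        * ((μb 1 (X ω) - μb 0 (X ω)) / (lamb 1 (X ω) - lamb 0 (X ω)))) ∂P)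
      = ∫ ω, db (X ω) * ρ (X ω) ∂P - hPbar
        + (∫ ω, (H1 (X ω) - H0 (X ω)) * π₁ (X ω) ∂P + ∫ ω, H0 (X ω) ∂P) := by
    have e0 : (∫ ω,
          (((μb 1 (X ω) - μb 0 (X ω)) / (lamb 1 (X ω) - lamb 0 (X ω))) * A ω - hPbar)
            + (ρb (X ω) / (lamb 1 (X ω) - lamb 0 (X ω)))
                * ((2 * Z ω - 1) / (Z ω * π₁b (X ω) + (1 - Z ω) * (1 - π₁b (X ω))))
                * (M (Y ω) * (1 - A ω)
                    - (Z ω * μb 1 (X ω) + (1 - Z ω) * μb 0 (X ω))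
                    - (A ω - (Z ω * lamb 1 (X ω) + (1 - Z ω) * lamb 0 (X ω)))
                        * ((μb 1 (X ω) - μb 0 (X ω)) / (lamb 1 (X ω) - lamb 0 (X ω)))) ∂P)
        = ∫ ω, ((db (X ω) * A ω - hPbar) + (F ω * gf ω - F ω * kf ω)) ∂P :=
      integral_congr_ae (Filter.Eventually.of_forall fun ω => by
        simp only [hFd, hgfd, hkfd, hdbd, hqd]; ring)
    have i1 : Integrable (fun ω => db (X ω) * A ω - hPbar) P :=
      intdbA.sub (integrable_const hPbar)
    have i2 : Integrable (fun ω => F ω * gf ω - F ω * kf ω) P := intFgf.sub intFkf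
    rw [e0, integral_add i1 i2,
      integral_sub intdbA (integrable_const hPbar), integral_sub intFgf intFkf,
      integral_const, step1, step2]
    have e1 : ∫ ω, F ω * gc ω ∂P - ∫ ω, F ω * kf ω ∂P
        = ∫ ω, ((H1 (X ω) - H0 (X ω)) * Z ω + H0 (X ω)) ∂P := by
      rw [← integral_sub intFgc intFkf]
      exact integral_congr_ae (Filter.Eventually.of_forall fun ω => hsplit ω)
    rw [e1, integral_add intφZ intH0, step3]
    simp
  rw [big]
  have eT : (∫ ω, ((μ 1 (X ω) - μ 0 (X ω)) / (lam 1 (X ω) - lam 0 (X ω))) * ρ (X ω) ∂P)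
      = ∫ ω, dlt (X ω) * ρ (X ω) ∂P :=
    integral_congr_ae (Filter.Eventually.of_forall fun ω => by simp only [hdltd])
  rw [eT]
  have final : (∫ ω, db (X ω) * ρ (X ω) ∂P) - (∫ ω, dlt (X ω) * ρ (X ω) ∂P)
      + ((∫ ω, (H1 (X ω) - H0 (X ω)) * π₁ (X ω) ∂P) + ∫ ω, H0 (X ω) ∂P)
      = ∫ ω,
          (((μb 1 (X ω) - μb 0 (X ω)) / (lamb 1 (X ω) - lamb 0 (X ω)))
              - ((μ 1 (X ω) - μ 0 (X ω)) / (lam 1 (X ω) - lam 0 (X ω))))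
            * ((ρb (X ω) / (lamb 1 (X ω) - lamb 0 (X ω)))
                  * ((lamb 1 (X ω) - lamb 0 (X ω)) - (lam 1 (X ω) - lam 0 (X ω)))
                - (ρb (X ω) - ρ (X ω)))
          + (ρb (X ω) / (lamb 1 (X ω) - lamb 0 (X ω))) * (π₁b (X ω) - π₁ (X ω))
              * (((μb 1 (X ω) - μ 1 (X ω))
                    - ((μb 1 (X ω) - μb 0 (X ω)) / (lamb 1 (X ω) - lamb 0 (X ω)))
                        * (lamb 1 (X ω) - lam 1 (X ω))) / π₁b (X ω)
                + ((μb 0 (X ω) - μ 0 (X ω))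
                    - ((μb 1 (X ω) - μb 0 (X ω)) / (lamb 1 (X ω) - lamb 0 (X ω)))
                        * (lamb 0 (X ω) - lam 0 (X ω))) / (1 - π₁b (X ω))) ∂P := by
    have i3 : Integrable (fun ω => db (X ω) * ρ (X ω) - dlt (X ω) * ρ (X ω)) P :=
      intdbρ.sub intT
    have i4 : Integrable (fun ω => (H1 (X ω) - H0 (X ω)) * π₁ (X ω) + H0 (X ω)) P :=
      intφπ.add intH0
    rw [← integral_add intφπ intH0, ← integral_sub intdbρ intT, ← integral_add i3 i4]
    refine integral_congr_ae (Filter.Eventually.of_forall fun ω => ?_)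
    simp only [hdbd, hdltd, hqd, hH1d, hH0d]
    exact keyalg (μ 1 (X ω)) (μ 0 (X ω)) (lam 1 (X ω)) (lam 0 (X ω)) (ρ (X ω)) (π₁ (X ω))
      (μb 1 (X ω)) (μb 0 (X ω)) (lamb 1 (X ω)) (lamb 0 (X ω)) (ρb (X ω)) (π₁b (X ω))
      (hdAne _) (hdAbne _) (hπbne _) (h1πbne _)
  linarith [final]
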